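/- Let p be a prime and n ≥ 1. The number of orbits of the diagonal left action of SL(2, ZMod p) on n-tuples of column vectors in (ZMod p)^2 (equivalently, on 2×n matrices over ZMod p by left multiplication) equals (p^(2n-1) + p^(n+1) - p^(n-1) + p^2 - p - 1)/(p^2 - 1). -/

import Mathlib

/-- The orbit of a `2 × n` matrix over `ZMod p` under left multiplication by `SL(2, ZMod p)`. -/
def slOrbit (p n : ℕ) (M : Matrix (Fin 2) (Fin n) (ZMod p)) :
    Set (Matrix (Fin 2) (Fin n) (ZMod p)) :=
  { N | ∃ S : Matrix.SpecialLinearGroup (Fin 2) (ZMod p),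
      (S : Matrix (Fin 2) (Fin 2) (ZMod p)) * M = N }

/-- The number of orbits of `SL(2, ZMod p)` on `2 × n` matrices over `ZMod p`. -/
noncomputable def r (p n : ℕ) : ℕ :=
  Nat.card { O : Set (Matrix (Fin 2) (Fin n) (ZMod p)) // ∃ M, O = slOrbit p n M }

open Matrix MulAction Finset

set_option linter.unusedSectionVars false

section Aux

variable {p : ℕ} [Fact p.Prime]

lemma card_ne_zero_sub : Fintype.card {a : ZMod p // a ≠ 0} = p - 1 := by
  rw [Fintype.card_subtype_compl]
  simp [ZMod.card]

/-- card of hyperbola/degenerate conic in F². -/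
lemma card_mul_eq (k : ZMod p) :
    Fintype.card {y : ZMod p × ZMod p // y.1 * y.2 = k} =
      if k = 0 then 2 * p - 1 else p - 1 := by
  split_ifs with hk
  · subst hk
    have h1 : Fintype.card {y : ZMod p × ZMod p // ¬ y.1 * y.2 = 0} = (p-1) * (p-1) := by
      have e1 : {y : ZMod p × ZMod p // ¬ y.1 * y.2 = 0} ≃
          {y : ZMod p × ZMod p // y.1 ≠ 0 ∧ y.2 ≠ 0} :=
        Equiv.subtypeEquivRight (fun y => by simp [mul_eq_zero, not_or])
      rw [Fintype.card_congr e1,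
        Fintype.card_congr
          (Equiv.subtypeProdEquivProd (p := fun a : ZMod p => a ≠ 0) (q := fun a : ZMod p => a ≠ 0)),
        Fintype.card_prod, card_ne_zero_sub]
    have e2 : {y : ZMod p × ZMod p // y.1 * y.2 = 0} ≃
        {y : ZMod p × ZMod p // ¬ ¬ y.1 * y.2 = 0} :=
      Equiv.subtypeEquivRight (fun y => (not_not).symm)
    rw [Fintype.card_congr e2, Fintype.card_subtype_compl, h1, Fintype.card_prod, ZMod.card]
    have hp2 : 2 ≤ p := (Fact.out : p.Prime).two_le
    obtain ⟨m, rfl⟩ : ∃ m, p = m + 1 := ⟨p - 1, by omega⟩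
    have : (m+1)*(m+1) = m*m + 2*m+1 := by ring
    have h3 : (m+1) - 1 = m := by omega
    rw [h3]
    generalize m*m = q at this ⊢
    omega
  · have e : {y : ZMod p × ZMod p // y.1 * y.2 = k} ≃ {a : ZMod p // a ≠ 0} := by
      refine ⟨fun y => ⟨y.1.1, fun h => hk (by rw [← y.2, h, zero_mul])⟩,
        fun a => ⟨(a.1, a.1⁻¹ * k), by
          have := a.2
          field_simp⟩, fun y => ?_, fun a => rfl⟩
      apply Subtype.ext
      obtain ⟨⟨b, c⟩, hy⟩ := y
      have hb : b ≠ 0 := fun h => hk (by rw [← hy, h, zero_mul])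
      simp only at hy ⊢
      have : b⁻¹ * k = c := by field_simp; exact hy.symm
      rw [this]
    rw [Fintype.card_congr e, card_ne_zero_sub]

/-- explicit coordinates equiv for 2x2 matrices: ((a,d),(b,c)) -/
def matEquiv : Matrix (Fin 2) (Fin 2) (ZMod p) ≃ (ZMod p × ZMod p) × (ZMod p × ZMod p) where
  toFun A := ((A 0 0, A 1 1), (A 0 1, A 1 0))
  invFun t := !![t.1.1, t.2.1; t.2.2, t.1.2]
  left_inv A := by
    ext i j
    fin_cases i <;> fin_cases j <;> simp
  right_inv t := by simp

def sl2Equiv : Matrix.SpecialLinearGroup (Fin 2) (ZMod p) ≃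
    {t : (ZMod p × ZMod p) × (ZMod p × ZMod p) // t.1.1 * t.1.2 - t.2.1 * t.2.2 = 1} := by
  refine (⟨fun S => ⟨S.1, S.2⟩, fun A => ⟨A.1, A.2⟩, fun _ => rfl, fun _ => rfl⟩ :
      Matrix.SpecialLinearGroup (Fin 2) (ZMod p) ≃ {A : Matrix (Fin 2) (Fin 2) (ZMod p) // A.det = 1}).trans
    (matEquiv.subtypeEquiv fun A => ?_)
  rw [Matrix.det_fin_two]
  rfl

lemma sl2Equiv_fst {p : ℕ} [Fact p.Prime] (S : Matrix.SpecialLinearGroup (Fin 2) (ZMod p)) :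
    (sl2Equiv S).1 = ((S.1 0 0, S.1 1 1), (S.1 0 1, S.1 1 0)) := rfl

lemma card_fiber_sum {α : Type*} [Fintype α] [DecidableEq α] (f : α → ZMod p) :
    Fintype.card {x : α × (ZMod p × ZMod p) // x.2.1 * x.2.2 = f x.1} =
      (univ.filter (fun a => f a = 0)).card * (2 * p - 1) +
      (univ.filter (fun a => ¬ f a = 0)).card * (p - 1) := by
  rw [Fintype.card_congr (Equiv.subtypeProdEquivSigmaSubtype
    (fun a (y : ZMod p × ZMod p) => y.1 * y.2 = f a)), Fintype.card_sigma]
  have : ∀ a : α, Fintype.card {y : ZMod p × ZMod p // y.1 * y.2 = f a} =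
      if f a = 0 then 2 * p - 1 else p - 1 := fun a => card_mul_eq (f a)
  rw [Finset.sum_congr rfl (fun a _ => this a), Finset.sum_ite]
  simp [mul_comm]

lemma card_filter_eq_card_subtype {α : Type} [Fintype α] (P : α → Prop) [DecidablePred P] :
    (univ.filter P).card = Fintype.card {a : α // P a} := (Fintype.card_subtype P).symm

lemma card_sl2 : Fintype.card (Matrix.SpecialLinearGroup (Fin 2) (ZMod p)) = p^3 - p := by
  have e2 : {t : (ZMod p × ZMod p) × (ZMod p × ZMod p) // t.1.1 * t.1.2 - t.2.1 * t.2.2 = 1} ≃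
      {x : (ZMod p × ZMod p) × (ZMod p × ZMod p) // x.2.1 * x.2.2 = x.1.1 * x.1.2 - 1} :=
    Equiv.subtypeEquivRight (fun t => by constructor <;> intro h <;> linear_combination -h)
  rw [Fintype.card_congr (sl2Equiv.trans e2),
    card_fiber_sum (fun a : ZMod p × ZMod p => a.1 * a.2 - 1)]
  have h1 : (univ.filter (fun a : ZMod p × ZMod p => a.1 * a.2 - 1 = 0)).card = p - 1 := by
    rw [card_filter_eq_card_subtype]
    have : {a : ZMod p × ZMod p // a.1 * a.2 - 1 = 0} ≃ {a : ZMod p × ZMod p // a.1 * a.2 = 1} :=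
      Equiv.subtypeEquivRight (fun a => sub_eq_zero)
    rw [Fintype.card_congr this, _root_.card_mul_eq]
    simp [one_ne_zero]
  have h2 : (univ.filter (fun a : ZMod p × ZMod p => ¬ a.1 * a.2 - 1 = 0)).card = p * p - (p - 1) := by
    have := Finset.card_filter_add_card_filter_not
      (s := (univ : Finset (ZMod p × ZMod p))) (p := fun a : ZMod p × ZMod p => a.1 * a.2 - 1 = 0)
    simp only [Finset.card_univ, Fintype.card_prod, ZMod.card] at this
    omega
  rw [h1, h2]
  have hp2 : 2 ≤ p := (Fact.out : p.Prime).two_le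
  have c1 : 1 ≤ 2 * p := by omega
  have c2 : 1 ≤ p := by omega
  have c3 : p - 1 ≤ p * p := by nlinarith [Nat.sub_le p 1]
  have c4 : p ≤ p ^ 3 := by nlinarith
  zify [c1, c2, c3, c4]
  ring

lemma card_trace_two :
    Fintype.card {S : Matrix.SpecialLinearGroup (Fin 2) (ZMod p) //
      S.1 0 0 + S.1 1 1 = 2} = p * p := by
  classical
  -- step 1: to coordinates
  have e1 : {S : Matrix.SpecialLinearGroup (Fin 2) (ZMod p) // S.1 0 0 + S.1 1 1 = 2} ≃
      {t : (ZMod p × ZMod p) × (ZMod p × ZMod p) //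
        (t.1.1 * t.1.2 - t.2.1 * t.2.2 = 1) ∧ t.1.1 + t.1.2 = 2} := by
    refine (Equiv.subtypeEquiv sl2Equiv (fun S => ?_)).trans
      (Equiv.subtypeSubtypeEquivSubtypeInter _ _)
    rw [sl2Equiv_fst]
  -- step 2: eliminate d
  have e2 : {t : (ZMod p × ZMod p) × (ZMod p × ZMod p) //
        (t.1.1 * t.1.2 - t.2.1 * t.2.2 = 1) ∧ t.1.1 + t.1.2 = 2} ≃
      {x : ZMod p × (ZMod p × ZMod p) // x.2.1 * x.2.2 = x.1 * (2 - x.1) - 1} := by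
    refine ⟨fun t => ⟨(t.1.1.1, t.1.2), ?_⟩,
      fun x => ⟨((x.1.1, 2 - x.1.1), x.1.2), by linear_combination -x.2, by ring⟩,
      ?_, fun x => by apply Subtype.ext; rfl⟩
    · obtain ⟨⟨⟨a, d⟩, ⟨b, c⟩⟩, h1, h2⟩ := t
      simp only at h1 h2 ⊢
      have hd : d = 2 - a := by linear_combination h2
      subst hd
      linear_combination -h1
    · rintro ⟨⟨⟨a, d⟩, ⟨b, c⟩⟩, h1, h2⟩
      apply Subtype.ext
      show ((a, 2 - a), (b, c)) = ((a, d), (b, c))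
      rw [show (2 : ZMod p) - a = d by linear_combination -h2]
  rw [Fintype.card_congr (e1.trans e2),
    card_fiber_sum (fun a : ZMod p => a * (2 - a) - 1)]
  have key : ∀ a : ZMod p, a * (2 - a) - 1 = 0 ↔ a = 1 := by
    intro a
    constructor
    · intro h
      have h2 : (a - 1) * (a - 1) = 0 := by linear_combination -h
      rcases mul_eq_zero.mp h2 with h' | h' <;> exact sub_eq_zero.mp h'
    · rintro rfl; ring
  have h1 : (univ.filter (fun a : ZMod p => a * (2 - a) - 1 = 0)).card = 1 := by
    have : (univ.filter (fun a : ZMod p => a * (2 - a) - 1 = 0)) = {1} := by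
      ext a; simp [key a]
    rw [this, Finset.card_singleton]
  have h2 : (univ.filter (fun a : ZMod p => ¬ (a * (2 - a) - 1 = 0))).card = p - 1 := by
    have := Finset.card_filter_add_card_filter_not
      (s := (univ : Finset (ZMod p))) (p := fun a : ZMod p => a * (2 - a) - 1 = 0)
    simp only [Finset.card_univ, ZMod.card] at this
    omega
  rw [h1, h2]
  have hp2 : 2 ≤ p := (Fact.out : p.Prime).two_le
  have c1 : 1 ≤ 2 * p := by omega
  have c2 : 1 ≤ p := by omega
  zify [c1, c2]
  ring

lemma card_line {x y : ZMod p} (h : ¬(x = 0 ∧ y = 0)) :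
    Fintype.card {v : Fin 2 → ZMod p // x * v 0 + y * v 1 = 0} = p := by
  by_cases hx : x = 0
  · subst hx
    have hy : y ≠ 0 := fun h' => h ⟨rfl, h'⟩
    have e : {v : Fin 2 → ZMod p // 0 * v 0 + y * v 1 = 0} ≃ ZMod p := by
      refine ⟨fun v => v.1 0, fun t => ⟨![t, 0], by simp⟩, fun v => ?_, fun t => by simp⟩
      apply Subtype.ext
      funext i
      fin_cases i
      · simp
      · have hv := v.2
        simp only [zero_mul, zero_add, mul_eq_zero] at hv
        rcases hv with h' | h'
        · exact absurd h' hy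
        · simp [h'.symm]
    rw [Fintype.card_congr e, ZMod.card]
  · have e : {v : Fin 2 → ZMod p // x * v 0 + y * v 1 = 0} ≃ ZMod p := by
      refine ⟨fun v => v.1 1, fun t => ⟨![-(x⁻¹ * (y * t)), t], by simp; field_simp; ring⟩,
        fun v => ?_, fun t => by simp⟩
      apply Subtype.ext
      funext i
      fin_cases i
      · have hv := v.2
        simp only [Fin.zero_eta, Matrix.cons_val_zero]
        field_simp
        linear_combination -hv
      · simp
    rw [Fintype.card_congr e, ZMod.card]

lemma card_ker {a b c d : ZMod p} (hdet : a * d - b * c = 0)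
    (hne : ¬(a = 0 ∧ b = 0 ∧ c = 0 ∧ d = 0)) :
    Fintype.card {v : Fin 2 → ZMod p //
      a * v 0 + b * v 1 = 0 ∧ c * v 0 + d * v 1 = 0} = p := by
  by_cases hab : a = 0 ∧ b = 0
  · obtain ⟨rfl, rfl⟩ := hab
    have hcd : ¬(c = 0 ∧ d = 0) := fun ⟨h1, h2⟩ => hne ⟨rfl, rfl, h1, h2⟩
    have e : {v : Fin 2 → ZMod p // 0 * v 0 + 0 * v 1 = 0 ∧ c * v 0 + d * v 1 = 0} ≃
        {v : Fin 2 → ZMod p // c * v 0 + d * v 1 = 0} :=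
      Equiv.subtypeEquivRight (fun v => by simp)
    rw [Fintype.card_congr e, card_line hcd]
  · have e : {v : Fin 2 → ZMod p // a * v 0 + b * v 1 = 0 ∧ c * v 0 + d * v 1 = 0} ≃
        {v : Fin 2 → ZMod p // a * v 0 + b * v 1 = 0} := by
      refine Equiv.subtypeEquivRight (fun v => ⟨fun h => h.1, fun h1 => ⟨h1, ?_⟩⟩)
      by_cases ha : a = 0
      · have hb : b ≠ 0 := fun h' => hab ⟨ha, h'⟩
        have key : b * (c * v 0 + d * v 1) = 0 := by
          linear_combination d * h1 - (v 0) * hdet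
        rcases mul_eq_zero.mp key with h' | h'
        · exact absurd h' hb
        · exact h'
      · have key : a * (c * v 0 + d * v 1) = 0 := by
          linear_combination c * h1 + (v 1) * hdet
        rcases mul_eq_zero.mp key with h' | h'
        · exact absurd h' ha
        · exact h'
    rw [Fintype.card_congr e, card_line hab]

instance instDecEqSL (p : ℕ) : DecidableEq (Matrix.SpecialLinearGroup (Fin 2) (ZMod p)) :=
  fun A B => decidable_of_iff (A.1 = B.1) Subtype.ext_iff.symm

instance slAction (p n : ℕ) :
    MulAction (Matrix.SpecialLinearGroup (Fin 2) (ZMod p)) (Matrix (Fin 2) (Fin n) (ZMod p)) where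
  smul S M := S.1 * M
  one_smul M := show (1 : Matrix.SpecialLinearGroup (Fin 2) (ZMod p)).1 * M = M by
    simp
  mul_smul S T M := show (S * T).1 * M = S.1 * (T.1 * M) by
    simp [Matrix.mul_assoc]

lemma slSmul_def {n : ℕ} (S : Matrix.SpecialLinearGroup (Fin 2) (ZMod p))
    (M : Matrix (Fin 2) (Fin n) (ZMod p)) : S • M = S.1 * M := rfl

/-- fixed matrices are tuples of fixed columns -/
def fixedEquiv {n : ℕ} (S : Matrix.SpecialLinearGroup (Fin 2) (ZMod p)) :
    (fixedBy (Matrix (Fin 2) (Fin n) (ZMod p)) S) ≃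
      (Fin n → {v : Fin 2 → ZMod p // S.1.mulVec v = v}) where
  toFun M j := ⟨fun i => M.1 i j, by
    funext i
    have hM : S.1 * M.1 = M.1 := M.2
    have := congrFun (congrFun hM i) j
    simpa [Matrix.mulVec, Matrix.mul_apply, dotProduct] using this⟩
  invFun g := ⟨Matrix.of fun i j => (g j).1 i, by
    rw [MulAction.mem_fixedBy, slSmul_def]
    ext i j
    have := congrFun ((g j).2) i
    simpa [Matrix.mulVec, Matrix.mul_apply, dotProduct] using this⟩
  left_inv M := rfl
  right_inv g := rfl

lemma card_fixed_vec (S : Matrix.SpecialLinearGroup (Fin 2) (ZMod p)) :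
    Fintype.card {v : Fin 2 → ZMod p // S.1.mulVec v = v} =
      if S = 1 then p ^ 2 else if S.1 0 0 + S.1 1 1 = 2 then p else 1 := by
  have hdet : S.1 0 0 * S.1 1 1 - S.1 0 1 * S.1 1 0 = 1 := by
    have := S.2
    rwa [Matrix.det_fin_two] at this
  have hcond : ∀ v : Fin 2 → ZMod p, (S.1.mulVec v = v ↔
      ((S.1 0 0 - 1) * v 0 + S.1 0 1 * v 1 = 0 ∧
        S.1 1 0 * v 0 + (S.1 1 1 - 1) * v 1 = 0)) := by
    intro v
    rw [funext_iff, Fin.forall_fin_two]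
    simp only [Matrix.mulVec, dotProduct, Fin.sum_univ_two]
    constructor
    · rintro ⟨h1, h2⟩
      exact ⟨by linear_combination h1, by linear_combination h2⟩
    · rintro ⟨h1, h2⟩
      exact ⟨by linear_combination h1, by linear_combination h2⟩
  split_ifs with h1 h2
  · subst h1
    have e : {v : Fin 2 → ZMod p // (1 : Matrix.SpecialLinearGroup (Fin 2) (ZMod p)).1.mulVec v = v}
        ≃ (Fin 2 → ZMod p) :=
      Equiv.subtypeUnivEquiv (fun v => by simp)
    rw [Fintype.card_congr e]
    simp [ZMod.card, sq]
  · -- trace 2, S ≠ 1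
    have e := Equiv.subtypeEquivRight hcond
    rw [Fintype.card_congr e]
    apply card_ker
    · linear_combination hdet - h2
    · rintro ⟨ha, hb, hc, hd⟩
      apply h1
      apply Subtype.ext
      ext i j
      fin_cases i <;> fin_cases j <;>
        simp [Matrix.one_apply, sub_eq_zero.mp ha, sub_eq_zero.mp hd, hb, hc]
  · -- trace ≠ 2 : only zero fixed
    have hD : (S.1 0 0 - 1) * (S.1 1 1 - 1) - S.1 0 1 * S.1 1 0 ≠ 0 := by
      intro h
      apply h2
      linear_combination hdet - h
    have e : {v : Fin 2 → ZMod p // S.1.mulVec v = v} ≃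
        {v : Fin 2 → ZMod p // v = fun _ => 0} := by
      refine Equiv.subtypeEquivRight (fun v => ?_)
      rw [hcond v]
      constructor
      · rintro ⟨e1, e2⟩
        have hv0 : ((S.1 0 0 - 1) * (S.1 1 1 - 1) - S.1 0 1 * S.1 1 0) * v 0 = 0 := by
          linear_combination (S.1 1 1 - 1) * e1 - S.1 0 1 * e2
        have hv1 : ((S.1 0 0 - 1) * (S.1 1 1 - 1) - S.1 0 1 * S.1 1 0) * v 1 = 0 := by
          linear_combination (S.1 0 0 - 1) * e2 - S.1 1 0 * e1
        funext i
        fin_cases i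
        · exact (mul_eq_zero.mp hv0).resolve_left hD
        · exact (mul_eq_zero.mp hv1).resolve_left hD
      · rintro rfl
        constructor <;> ring
    rw [Fintype.card_congr e, Fintype.card_subtype_eq]

lemma slOrbit_eq_orbit {n : ℕ} (M : Matrix (Fin 2) (Fin n) (ZMod p)) :
    slOrbit p n M = MulAction.orbit (Matrix.SpecialLinearGroup (Fin 2) (ZMod p)) M :=
  Set.ext fun N => by simp [slOrbit, MulAction.mem_orbit_iff, slSmul_def]

lemma r_eq_card_quot (n : ℕ) :
    r p n = Nat.card (Quotient (MulAction.orbitRel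
      (Matrix.SpecialLinearGroup (Fin 2) (ZMod p)) (Matrix (Fin 2) (Fin n) (ZMod p)))) := by
  set G := Matrix.SpecialLinearGroup (Fin 2) (ZMod p)
  set β := Matrix (Fin 2) (Fin n) (ZMod p)
  have wd : ∀ M N : β, MulAction.orbitRel G β M N →
      (⟨slOrbit p n M, M, rfl⟩ : { O : Set β // ∃ M, O = slOrbit p n M }) =
        ⟨slOrbit p n N, N, rfl⟩ := by
    intro M N h
    apply Subtype.ext
    show slOrbit p n M = slOrbit p n N
    rw [slOrbit_eq_orbit, slOrbit_eq_orbit]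
    exact MulAction.orbit_eq_iff.mpr (MulAction.orbitRel_apply.mp h)
  have hbij : Function.Bijective (Quotient.lift
      (fun M : β => (⟨slOrbit p n M, M, rfl⟩ : { O : Set β // ∃ M, O = slOrbit p n M })) wd) := by
    constructor
    · intro x y
      refine Quotient.inductionOn₂ x y (fun M N h => ?_)
      have h' : slOrbit p n M = slOrbit p n N := congrArg Subtype.val h
      refine Quotient.sound (MulAction.orbitRel_apply.mpr ?_)
      rw [← slOrbit_eq_orbit, ← h']
      exact ⟨1, by simp⟩
    · rintro ⟨O, M, rfl⟩
      exact ⟨Quotient.mk _ M, rfl⟩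
  unfold r
  exact (Nat.card_eq_of_bijective _ hbij).symm

lemma burnside_eq (n : ℕ) :
    r p n * (p ^ 3 - p) =
      p ^ (2 * n) + (p * p - 1) * p ^ n + ((p ^ 3 - p) - p * p) := by
  classical
  set G := Matrix.SpecialLinearGroup (Fin 2) (ZMod p)
  set β := Matrix (Fin 2) (Fin n) (ZMod p)
  haveI : ∀ a : G, Fintype (fixedBy β a) := fun a => Fintype.ofFinite _
  haveI : Fintype (Quotient (MulAction.orbitRel G β)) := Fintype.ofFinite _
  have burn := MulAction.sum_card_fixedBy_eq_card_orbits_mul_card_group G β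
  -- compute each fixed-point count
  have hfix : ∀ S : G, Fintype.card (fixedBy β S) =
      (if S = 1 then p ^ (2 * n) else if S.1 0 0 + S.1 1 1 = 2 then p ^ n else 1) := by
    intro S
    have h1 : Fintype.card (fixedBy β S) =
        (Fintype.card {v : Fin 2 → ZMod p // S.1.mulVec v = v}) ^ n := by
      rw [← Nat.card_eq_fintype_card, Nat.card_congr (fixedEquiv S),
        Nat.card_eq_fintype_card, Fintype.card_fun, Fintype.card_fin]
    rw [h1, card_fixed_vec S]
    split_ifs <;> simp [← pow_mul, mul_comm n 2, one_pow]
  rw [Finset.sum_congr rfl (fun S _ => hfix S)] at burn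
  -- split the sum
  set T : Finset G := univ.filter (fun S : G => S.1 0 0 + S.1 1 1 = 2) with hT
  have hone : (1 : G) ∈ T := by
    simp only [hT, Finset.mem_filter, Finset.mem_univ, true_and]
    show (1 : Matrix (Fin 2) (Fin 2) (ZMod p)) 0 0 + (1 : Matrix (Fin 2) (Fin 2) (ZMod p)) 1 1 = 2
    simp [Matrix.one_apply]
    ring
  have hTcard : T.card = p * p := by
    rw [hT]
    rw [← Fintype.card_subtype]
    exact card_trace_two
  have hsplit : ∑ S : G, (if S = 1 then p ^ (2*n) else if S.1 0 0 + S.1 1 1 = 2 then p ^ n else 1)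
      = p ^ (2*n) + (p * p - 1) * p ^ n + (Fintype.card G - p * p) := by
    rw [← Finset.sum_filter_add_sum_filter_not univ (fun S : G => S.1 0 0 + S.1 1 1 = 2)]
    have hA : ∑ S ∈ T, (if S = 1 then p ^ (2*n) else if S.1 0 0 + S.1 1 1 = 2 then p ^ n else 1)
        = p ^ (2*n) + (p * p - 1) * p ^ n := by
      rw [← Finset.add_sum_erase T _ hone, if_pos rfl]
      congr 1
      have : ∀ S ∈ T.erase 1,
          (if S = 1 then p ^ (2*n) else if S.1 0 0 + S.1 1 1 = 2 then p ^ n else 1) = p ^ n := by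
        intro S hS
        rw [if_neg (Finset.ne_of_mem_erase hS), if_pos]
        exact (Finset.mem_filter.mp (Finset.mem_of_mem_erase hS)).2
      rw [Finset.sum_congr rfl this, Finset.sum_const, smul_eq_mul,
        Finset.card_erase_of_mem hone, hTcard]
    have hB : ∑ S ∈ univ.filter (fun S : G => ¬ (S.1 0 0 + S.1 1 1 = 2)),
        (if S = 1 then p ^ (2*n) else if S.1 0 0 + S.1 1 1 = 2 then p ^ n else 1)
        = Fintype.card G - p * p := by
      have h1 : ∀ S ∈ univ.filter (fun S : G => ¬ (S.1 0 0 + S.1 1 1 = 2)),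
          (if S = 1 then p ^ (2*n) else if S.1 0 0 + S.1 1 1 = 2 then p ^ n else 1) = 1 := by
        intro S hS
        have h2 := (Finset.mem_filter.mp hS).2
        have h3 : S ≠ 1 := by
          rintro rfl
          exact h2 ((Finset.mem_filter.mp hone).2)
        rw [if_neg h3, if_neg h2]
      rw [Finset.sum_congr rfl h1, Finset.sum_const, smul_eq_mul, mul_one,
        Finset.filter_not, Finset.card_sdiff_of_subset (Finset.filter_subset _ _), Finset.card_univ, ← hT,
        hTcard]
    rw [hA, hB]
  rw [hsplit] at burn
  have hr : r p n = Fintype.card (Quotient (MulAction.orbitRel G β)) := by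
    rw [r_eq_card_quot, Nat.card_eq_fintype_card]
  rw [hr, ← card_sl2 (p := p)]
  exact burn.symm

end Aux

theorem card_orbits_formula (p n : ℕ) (hp : p.Prime) (hn : 1 ≤ n) :
    r p n =
      (p ^ (2 * n - 1) + p ^ (n + 1) - p ^ (n - 1) + p ^ 2 - p - 1) / (p ^ 2 - 1) := by
  haveI : Fact p.Prime := ⟨hp⟩
  have key := burnside_eq (p := p) n
  have hp2 : 2 ≤ p := hp.two_le
  have hp1 : 1 ≤ p := by omega
  -- ℕ inequalities needed for casts
  have hcube : p ^ 3 = p * p * p := by ring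
  have h_a : p ≤ p ^ 3 := by nlinarith [hcube]
  have h_b : 1 ≤ p * p := by nlinarith
  have h_c : p * p ≤ p ^ 3 - p := by
    have := Nat.sub_add_cancel h_a
    nlinarith [hcube]
  have g0 : p ^ (n - 1) ≤ p ^ (2 * n - 1) := Nat.pow_le_pow_right hp1 (by omega)
  have hsq : p ^ 2 = p * p := by ring
  have g0' : p ≤ p ^ 2 := by nlinarith [hsq]
  have g0'' : p + 1 ≤ p ^ 2 := by nlinarith [hsq]
  have g1 : p ^ (n - 1) ≤ p ^ (2 * n - 1) + p ^ (n + 1) := by omega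
  have g2 : p ≤ p ^ (2 * n - 1) + p ^ (n + 1) - p ^ (n - 1) + p ^ 2 := by omega
  have g3 : 1 ≤ p ^ (2 * n - 1) + p ^ (n + 1) - p ^ (n - 1) + p ^ 2 - p := by omega
  -- move to ℤ
  zify [h_a, h_b, h_c] at key
  have f1 : (p : ℤ) ^ (2 * n - 1) * p = p ^ (2 * n) := by
    rw [← pow_succ]; congr 1; omega
  have f2 : (p : ℤ) ^ (n - 1) * p = p ^ n := by
    rw [← pow_succ]; congr 1; omega
  have f3 : (p : ℤ) ^ (n + 1) = p ^ n * p := pow_succ _ _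
  have hPne : (p : ℤ) ≠ 0 := by positivity
  have hmul : ((p : ℤ) ^ (2 * n - 1) + p ^ (n + 1) - p ^ (n - 1) + p ^ 2 - p - 1) * p =
      (r p n : ℤ) * ((p : ℤ) ^ 2 - 1) * p := by
    linear_combination f1 + (p : ℤ) * f3 - f2 - key
  have hint : ((p : ℤ) ^ (2 * n - 1) + p ^ (n + 1) - p ^ (n - 1) + p ^ 2 - p - 1) =
      (r p n : ℤ) * ((p : ℤ) ^ 2 - 1) := mul_right_cancel₀ hPne hmul
  have hnat : p ^ (2 * n - 1) + p ^ (n + 1) - p ^ (n - 1) + p ^ 2 - p - 1 =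
      r p n * (p ^ 2 - 1) := by
    have h12 : 1 ≤ p ^ 2 := by omega
    zify [g1, g2, g3, h12]
    exact hint
  rw [hnat, Nat.mul_div_cancel]
  omega
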